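/- Let q be a prime power and A, B nonempty subsets of the finite field F_q. Then there exists ξ ∈ F_q \ {0} such that |A + ξ·B| ≥ |A||B|(q-1) / (|A||B| - (|A|+|B|) + q), where A + ξ·B = {a + ξb : a ∈ A, b ∈ B}. -/

import Mathlib

open Pointwise


theorem count_xi {F : Type*} [Field F] [Fintype F] [DecidableEq F] (a₁ a₂ b₁ b₂ : F) :
    ((Finset.univ.erase (0:F)).filter fun ξ => a₁ + ξ*b₁ = a₂ + ξ*b₂).card
    = (if a₁ = a₂ then 1 else 0) * (if b₁ = b₂ then (Fintype.card F - 1) else 0)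
      + (if a₁ = a₂ then 0 else 1) * (if b₁ = b₂ then 0 else 1) := by
  by_cases ha : a₁ = a₂ <;> by_cases hb : b₁ = b₂
  · rw [if_pos ha, if_pos hb, if_pos ha, if_pos hb, one_mul, zero_mul, add_zero]
    rw [Finset.filter_true_of_mem (fun ξ _ => by rw [ha, hb])]
    simp [Finset.card_erase_of_mem]
  · rw [if_pos ha, if_neg hb, if_pos ha, if_neg hb, mul_zero, zero_mul, add_zero]
    rw [Finset.filter_false_of_mem, Finset.card_empty]
    intro ξ hξ h
    rw [ha] at h
    exact hb (mul_left_cancel₀ (Finset.ne_of_mem_erase hξ) (add_left_cancel h))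
  · rw [if_neg ha, if_pos hb, if_neg ha, if_pos hb, zero_mul, mul_zero, add_zero]
    rw [Finset.filter_false_of_mem, Finset.card_empty]
    intro ξ hξ h
    rw [hb] at h
    exact ha (add_right_cancel h)
  · rw [if_neg ha, if_neg hb, if_neg ha, if_neg hb, zero_mul, one_mul, zero_add]
    have hb' : b₁ - b₂ ≠ 0 := sub_ne_zero.2 hb
    have ha' : a₂ - a₁ ≠ 0 := sub_ne_zero.2 (Ne.symm ha)
    rw [show ((Finset.univ.erase (0:F)).filter fun ξ => a₁ + ξ*b₁ = a₂ + ξ*b₂)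
        = {(a₂ - a₁)/(b₁ - b₂)} from ?_]
    · simp
    ext ξ
    simp only [Finset.mem_filter, Finset.mem_erase, Finset.mem_univ, true_and, and_true,
      Finset.mem_singleton]
    constructor
    · rintro ⟨hξ, h⟩
      field_simp
      linear_combination h
    · rintro rfl
      refine ⟨div_ne_zero ha' hb', ?_⟩
      field_simp
      ring

-- energy of A and ξ•B equals count of quadruples with a₁ + ξb₁ = a₂ + ξb₂
theorem energy_smul {F : Type*} [Field F] [Fintype F] [DecidableEq F]
    (A B : Finset F) {ξ : F} (hξ : ξ ≠ 0) :
    Finset.addEnergy A (ξ • B)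
    = (((A ×ˢ A) ×ˢ B ×ˢ B).filter fun x : (F × F) × F × F =>
        x.1.1 + ξ * x.2.1 = x.1.2 + ξ * x.2.2).card := by
  rw [Finset.addEnergy]
  apply Finset.card_bij' (fun x _ => ((x.1.1, x.1.2), (ξ⁻¹ * x.2.1, ξ⁻¹ * x.2.2)))
    (fun x _ => ((x.1.1, x.1.2), (ξ * x.2.1, ξ * x.2.2)))
  · rintro ⟨⟨a₁, a₂⟩, b₁, b₂⟩ hx
    simp only [Finset.mem_filter, Finset.mem_product, Finset.mem_smul_finset,
      smul_eq_mul] at hx ⊢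
    obtain ⟨⟨⟨ha₁, ha₂⟩, hb₁, hb₂⟩, h⟩ := hx
    obtain ⟨c₁, hc₁, rfl⟩ := hb₁
    obtain ⟨c₂, hc₂, rfl⟩ := hb₂
    rw [inv_mul_cancel_left₀ hξ, inv_mul_cancel_left₀ hξ]
    exact ⟨⟨⟨ha₁, ha₂⟩, hc₁, hc₂⟩, h⟩
  · rintro ⟨⟨a₁, a₂⟩, b₁, b₂⟩ hx
    simp [mul_inv_cancel_left₀ hξ]
  · rintro ⟨⟨a₁, a₂⟩, b₁, b₂⟩ hx
    simp [inv_mul_cancel_left₀ hξ]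
  · rintro ⟨⟨a₁, a₂⟩, b₁, b₂⟩ hx
    simp only [Finset.mem_filter, Finset.mem_product, Finset.mem_smul_finset,
      smul_eq_mul] at hx ⊢
    obtain ⟨⟨⟨ha₁, ha₂⟩, hb₁, hb₂⟩, h⟩ := hx
    exact ⟨⟨⟨ha₁, ha₂⟩, ⟨b₁, hb₁, rfl⟩, ⟨b₂, hb₂, rfl⟩⟩, h⟩

theorem diag_sum {F : Type*} [DecidableEq F] (A : Finset F) :
    (∑ p ∈ A ×ˢ A, if p.1 = p.2 then (1:ℕ) else 0) = A.card := by
  rw [Finset.sum_product]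
  simp [Finset.sum_ite_eq]

theorem offdiag_sum {F : Type*} [DecidableEq F] (A : Finset F) :
    (∑ p ∈ A ×ˢ A, if p.1 = p.2 then (0:ℕ) else 1) = A.card * A.card - A.card := by
  have h1 := diag_sum A
  have h2 : (∑ p ∈ A ×ˢ A, ((if p.1 = p.2 then (1:ℕ) else 0) + if p.1 = p.2 then (0:ℕ) else 1))
      = A.card * A.card := by
    rw [← Finset.card_product A A, Finset.card_eq_sum_ones]
    exact Finset.sum_congr rfl fun p _ => by by_cases h : p.1 = p.2 <;> simp [h]
  rw [Finset.sum_add_distrib, h1] at h2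
  omega

theorem sum_e {F : Type*} [Field F] [Fintype F] [DecidableEq F] (A B : Finset F)
    (count_xi : ∀ a₁ a₂ b₁ b₂ : F,
      ((Finset.univ.erase (0:F)).filter fun ξ => a₁ + ξ*b₁ = a₂ + ξ*b₂).card
      = (if a₁ = a₂ then 1 else 0) * (if b₁ = b₂ then (Fintype.card F - 1) else 0)
        + (if a₁ = a₂ then 0 else 1) * (if b₁ = b₂ then 0 else 1)) :
    (∑ ξ ∈ Finset.univ.erase (0:F),
      (((A ×ˢ A) ×ˢ B ×ˢ B).filter fun x : (F × F) × F × F =>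
        x.1.1 + ξ * x.2.1 = x.1.2 + ξ * x.2.2).card)
    = A.card * B.card * (Fintype.card F - 1)
      + (A.card * A.card - A.card) * (B.card * B.card - B.card) := by
  have swap : (∑ ξ ∈ Finset.univ.erase (0:F),
      (((A ×ˢ A) ×ˢ B ×ˢ B).filter fun x : (F × F) × F × F =>
        x.1.1 + ξ * x.2.1 = x.1.2 + ξ * x.2.2).card)
      = ∑ x ∈ (A ×ˢ A) ×ˢ B ×ˢ B,
        ((Finset.univ.erase (0:F)).filter fun ξ =>
          x.1.1 + ξ * x.2.1 = x.1.2 + ξ * x.2.2).card := by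
    simp_rw [Finset.card_filter]
    exact Finset.sum_comm
  rw [swap]
  have : ∀ x ∈ (A ×ˢ A) ×ˢ B ×ˢ B,
      ((Finset.univ.erase (0:F)).filter fun ξ =>
          x.1.1 + ξ * x.2.1 = x.1.2 + ξ * x.2.2).card
      = (if x.1.1 = x.1.2 then 1 else 0) * (if x.2.1 = x.2.2 then (Fintype.card F - 1) else 0)
        + (if x.1.1 = x.1.2 then 0 else 1) * (if x.2.1 = x.2.2 then 0 else 1) :=
    fun x _ => count_xi x.1.1 x.1.2 x.2.1 x.2.2
  rw [Finset.sum_congr rfl this, Finset.sum_add_distrib]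
  have fact : ∀ (f g : F × F → ℕ),
      (∑ x ∈ (A ×ˢ A) ×ˢ B ×ˢ B, f x.1 * g x.2)
      = (∑ p ∈ A ×ˢ A, f p) * (∑ y ∈ B ×ˢ B, g y) := by
    intro f g
    rw [Finset.sum_product]
    exact (Finset.sum_mul_sum _ _ _ _).symm
  rw [fact (fun p => if p.1 = p.2 then 1 else 0)
        (fun y => if y.1 = y.2 then Fintype.card F - 1 else 0),
      fact (fun p => if p.1 = p.2 then 0 else 1) (fun y => if y.1 = y.2 then 0 else 1)]
  have hB1 : (∑ y ∈ B ×ˢ B, if y.1 = y.2 then (Fintype.card F - 1) else 0)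
      = B.card * (Fintype.card F - 1) := by
    rw [Finset.sum_product]
    simp [Finset.sum_ite_eq]
  rw [diag_sum A, hB1, offdiag_sum A, offdiag_sum B]
  ring

theorem stmt_0 {F : Type*} [Field F] [Fintype F]
    (A B : Set F) (hA : A.Nonempty) (hB : B.Nonempty) :
    ∃ ξ : F, ξ ≠ 0 ∧
      ((A + ξ • B).ncard : ℝ) ≥
        (A.ncard * B.ncard * (Fintype.card F - 1)) /
          (A.ncard * B.ncard - (A.ncard + B.ncard) + Fintype.card F) := by
  classical
  set q := Fintype.card F with hqdef
  set A' := A.toFinset with hA'def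
  set B' := B.toFinset with hB'def
  have hmA : A.ncard = A'.card := Set.ncard_eq_toFinset_card' A
  have hmB : B.ncard = B'.card := Set.ncard_eq_toFinset_card' B
  set m := A'.card with hmdef
  set n := B'.card with hndef
  have hA'ne : A'.Nonempty := Set.toFinset_nonempty.2 hA
  have hB'ne : B'.Nonempty := Set.toFinset_nonempty.2 hB
  have hm1 : 1 ≤ m := hA'ne.card_pos
  have hn1 : 1 ≤ n := hB'ne.card_pos
  have hq2 : 2 ≤ q := Fintype.one_lt_card
  have hne : (Finset.univ.erase (0:F)).Nonempty := ⟨1, by simp⟩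
  obtain ⟨ξ, hξmem, hmin⟩ := Finset.exists_min_image (Finset.univ.erase (0:F))
    (fun ξ => (((A' ×ˢ A') ×ˢ B' ×ˢ B').filter fun x : (F × F) × F × F =>
        x.1.1 + ξ * x.2.1 = x.1.2 + ξ * x.2.2).card) hne
  have hξ : ξ ≠ 0 := Finset.ne_of_mem_erase hξmem
  refine ⟨ξ, hξ, ?_⟩
  set e := (((A' ×ˢ A') ×ˢ B' ×ˢ B').filter fun x : (F × F) × F × F =>
        x.1.1 + ξ * x.2.1 = x.1.2 + ξ * x.2.2).card with hedef
  -- pigeonhole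
  have hcard_erase : (Finset.univ.erase (0:F)).card = q - 1 := by
    rw [Finset.card_erase_of_mem (Finset.mem_univ 0), Finset.card_univ]
  have h1 : (q - 1) * e ≤ m * n * (q - 1) + (m * m - m) * (n * n - n) := by
    calc (q - 1) * e = (Finset.univ.erase (0:F)).card • e := by rw [hcard_erase, smul_eq_mul]
    _ ≤ ∑ ζ ∈ Finset.univ.erase (0:F),
        (((A' ×ˢ A') ×ˢ B' ×ˢ B').filter fun x : (F × F) × F × F =>
          x.1.1 + ζ * x.2.1 = x.1.2 + ζ * x.2.2).card :=
        Finset.card_nsmul_le_sum _ _ _ hmin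
    _ = _ := sum_e A' B' (fun a₁ a₂ b₁ b₂ => count_xi a₁ a₂ b₁ b₂)
  -- Cauchy-Schwarz
  set k := (A' + ξ • B').card with hkdef
  have hCS : m ^ 2 * n ^ 2 ≤ k * e := by
    have h := Finset.le_card_add_mul_addEnergy A' (ξ • B')
    rw [energy_smul A' B' hξ] at h
    have hcard_smul : (ξ • B').card = n := by
      rw [Finset.smul_finset_def]
      exact Finset.card_image_of_injective _ (MulAction.injective₀ hξ)
    rwa [hcard_smul] at h
  -- relate ncard to k
  have hk : (A + ξ • B).ncard = k := by
    have hset : (A + ξ • B) = ↑(A' + ξ • B') := by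
      rw [Finset.coe_add, Finset.coe_smul_finset, hA'def, hB'def,
        Set.coe_toFinset, Set.coe_toFinset]
    rw [hset, Set.ncard_coe_finset]
  rw [hk, hmA, hmB]
  -- final arithmetic
  have keyN : (q - 1) * (m ^ 2 * n ^ 2) ≤ k * (m * n * (q - 1) + (m * m - m) * (n * n - n)) :=
    calc (q - 1) * (m ^ 2 * n ^ 2) ≤ (q - 1) * (k * e) := Nat.mul_le_mul_left _ hCS
    _ = k * ((q - 1) * e) := by ring
    _ ≤ k * (m * n * (q - 1) + (m * m - m) * (n * n - n)) := Nat.mul_le_mul_left _ h1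
  have keyR : ((q:ℝ) - 1) * ((m:ℝ) ^ 2 * n ^ 2)
      ≤ (k:ℝ) * ((m:ℝ) * n * ((q:ℝ) - 1) + ((m:ℝ) * m - m) * ((n:ℝ) * n - n)) := by
    have := (Nat.cast_le (α := ℝ)).2 keyN
    push_cast [Nat.cast_sub (by omega : 1 ≤ q), Nat.cast_sub (Nat.le_mul_of_pos_left m hm1),
      Nat.cast_sub (Nat.le_mul_of_pos_left n hn1)] at this
    convert this using 2
  have hmR : (1:ℝ) ≤ m := by exact_mod_cast hm1
  have hnR : (1:ℝ) ≤ n := by exact_mod_cast hn1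
  have hqR : (2:ℝ) ≤ q := by exact_mod_cast hq2
  have hD : (0:ℝ) < (m:ℝ) * n - ((m:ℝ) + n) + q := by nlinarith
  rw [ge_iff_le, div_le_iff₀ hD]
  have hmn : (0:ℝ) < (m:ℝ) * n := by nlinarith
  rw [← mul_le_mul_iff_of_pos_right hmn]
  nlinarith [keyR]
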